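/- Let p < q < r be primes with q dividing r − 1, and let t be an integer whose residue class modulo pr is a unit of multiplicative order q, with t ≡ 1 modulo p and t of order q modulo r. Then the group G(q, pr, t) has exactly p·q + p·(r − 1)/q conjugacy classes. -/

import Mathlib

/-- The units of `ZMod e` act on `Multiplicative (ZMod e)` as (multiplicative) automorphisms. -/
def unitsMulAut (e : ℕ) : (ZMod e)ˣ →* MulAut (Multiplicative (ZMod e)) where
  toFun u := AddEquiv.toMultiplicative (DistribMulAction.toAddAut (ZMod e)ˣ (ZMod e) u)
  map_one' := by
    ext x
    show Multiplicative.ofAdd ((1 : (ZMod e)ˣ) • x.toAdd) = x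
    simp
  map_mul' u v := by
    ext x
    show Multiplicative.ofAdd (((u * v) : (ZMod e)ˣ) • x.toAdd)
      = Multiplicative.ofAdd (u • v • x.toAdd)
    rw [mul_smul]

/-- The homomorphism `Multiplicative (ZMod d) →* (ZMod e)ˣ` sending `a` to `u ^ a`,
well defined since `u ^ d = 1`. -/
def zmodPowHom {e : ℕ} (d : ℕ) (u : (ZMod e)ˣ) (hu : u ^ d = 1) :
    Multiplicative (ZMod d) →* (ZMod e)ˣ :=
  AddMonoidHom.toMultiplicativeLeft
    (ZMod.lift d ⟨zmultiplesHom (Additive (ZMod e)ˣ) (Additive.ofMul u), by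
      simpa [zmultiplesHom, ← ofMul_pow] using congrArg Additive.ofMul hu⟩)

/-- The group `G(d,e,t)` where `u` is the unit of `ZMod e` given by `t` :
the semidirect product `(ℤ/eℤ) ⋊ (ℤ/dℤ)` in which `a ∈ ℤ/dℤ` acts on `ℤ/eℤ` by
`b ↦ t ^ a * b`.  This is the group with presentation
`⟨x, y | x ^ d = 1, y ^ e = 1, x⁻¹ * y * x = y ^ t⟩`, the element `(b, a)`
corresponding to `x ^ a * y ^ b`. -/
abbrev Gdet (d e : ℕ) (u : (ZMod e)ˣ) (hu : u ^ d = 1) : Type :=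
  SemidirectProduct (Multiplicative (ZMod e)) (Multiplicative (ZMod d))
    ((unitsMulAut e).comp (zmodPowHom d u hu))

section AuxGeneric
open Multiplicative MulAction
variable {d e : ℕ} (u : (ZMod e)ˣ) (hu : u ^ d = 1)

lemma zmodPowHom_natCast (m : ℕ) :
    zmodPowHom d u hu (Multiplicative.ofAdd (m : ZMod d)) = u ^ m := by
  show Additive.toMul ((ZMod.lift d ⟨zmultiplesHom (Additive (ZMod e)ˣ) (Additive.ofMul u), by
      simpa [zmultiplesHom, ← ofMul_pow] using congrArg Additive.ofMul hu⟩)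
      ((Multiplicative.ofAdd ((m : ZMod d))).toAdd)) = u ^ m
  rw [toAdd_ofAdd, show ((m : ZMod d)) = (((m:ℤ) : ZMod d)) by push_cast; ring,
    ZMod.lift_coe]
  show Additive.toMul ((m:ℤ) • Additive.ofMul u) = u ^ m
  rw [← ofMul_zpow]
  simp


lemma act_toAdd (x : Multiplicative (ZMod d)) (b : Multiplicative (ZMod e)) :
    ((((unitsMulAut e).comp (zmodPowHom d u hu)) x) b).toAdd
      = ((zmodPowHom d u hu x : (ZMod e)ˣ) : ZMod e) * b.toAdd := rfl

instance [NeZero d] [NeZero e] : Finite (Gdet d e u hu) := by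
  apply Finite.of_injective (fun g : Gdet d e u hu => (g.left, g.right))
  intro a b h
  simp only [Prod.mk.injEq] at h
  cases a; cases b
  simp_all

lemma conj_formula (g h : Gdet d e u hu) :
    g * h * g⁻¹ = ⟨Multiplicative.ofAdd (g.left.toAdd
        + ((zmodPowHom d u hu g.right : (ZMod e)ˣ) : ZMod e) * h.left.toAdd
        - ((zmodPowHom d u hu h.right : (ZMod e)ˣ) : ZMod e) * g.left.toAdd),
      h.right⟩ := by
  have hr : (g * h * g⁻¹).right = h.right := by
    simp only [SemidirectProduct.mul_right, SemidirectProduct.inv_right]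
    rw [mul_comm g.right h.right, mul_inv_cancel_right]
  have hl : (g * h * g⁻¹).left.toAdd = g.left.toAdd
        + ((zmodPowHom d u hu g.right : (ZMod e)ˣ) : ZMod e) * h.left.toAdd
        - ((zmodPowHom d u hu h.right : (ZMod e)ˣ) : ZMod e) * g.left.toAdd := by
    simp only [SemidirectProduct.mul_left, SemidirectProduct.inv_left,
      SemidirectProduct.mul_right]
    have hcomp : ∀ (x y : Multiplicative (ZMod d)) (n : Multiplicative (ZMod e)),
        (((unitsMulAut e).comp (zmodPowHom d u hu)) x)
          ((((unitsMulAut e).comp (zmodPowHom d u hu)) y) n)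
          = (((unitsMulAut e).comp (zmodPowHom d u hu)) (x * y)) n := by
      intro x y n; rw [map_mul]; rfl
    rw [hcomp]
    rw [show g.right * h.right * g.right⁻¹ = h.right by
      rw [mul_comm g.right h.right, mul_inv_cancel_right]]
    rw [toAdd_mul, toAdd_mul, act_toAdd, act_toAdd, toAdd_inv]
    ring
  ext
  · exact toAdd.injective hl
  · exact hr
open MulAction

lemma nat_card_sigma {ι : Type*} [Fintype ι] (f : ι → Type*) [∀ i, Finite (f i)] :
    Nat.card (Σ i, f i) = ∑ i, Nat.card (f i) := by
  classical
  haveI : ∀ i, Fintype (f i) := fun i => Fintype.ofFinite _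
  simp [Nat.card_eq_fintype_card, Fintype.card_sigma]

lemma nat_card_eq_sum_fibers {α β : Type*} [Finite α] [Fintype β] (f : α → β) :
    Nat.card α = ∑ b : β, Nat.card {a // f a = b} := by
  rw [← Nat.card_congr (Equiv.sigmaFiberEquiv f), nat_card_sigma]

lemma orbit_count {M α : Type*} [Group M] [MulAction M α] [Finite M] [Finite α] (x0 : α)
    (hfix : ∀ m : M, m • x0 = x0)
    (hfree : ∀ (m : M) (a : α), a ≠ x0 → m • a = a → m = 1) :
    Nat.card α = 1 + (Nat.card (orbitRel.Quotient M α) - 1) * Nat.card M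
      ∧ 1 ≤ Nat.card (orbitRel.Quotient M α) := by
  classical
  haveI : Fintype (orbitRel.Quotient M α) := Fintype.ofFinite _
  set Ω := orbitRel.Quotient M α
  set z : Ω := Quotient.mk'' x0 with hz
  have h1 : Nat.card α = ∑ ω : Ω, Nat.card ω.orbit := by
    rw [Nat.card_congr (selfEquivSigmaOrbits' M α), nat_card_sigma]
  have hzcard : Nat.card z.orbit = 1 := by
    have : z.orbit = {x0} := by
      rw [hz, orbitRel.Quotient.orbit_mk]
      ext a
      constructor
      · rintro ⟨m, rfl⟩; exact hfix m
      · rintro rfl; exact ⟨1, one_smul _ _⟩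
    rw [this]
    simp
  have hocard : ∀ ω : Ω, ω ≠ z → Nat.card ω.orbit = Nat.card M := by
    intro ω hω
    induction ω using Quotient.inductionOn' with
    | h a =>
      have ha : a ≠ x0 := by rintro rfl; exact hω rfl
      rw [orbitRel.Quotient.orbit_mk]
      have hstab : stabilizer M a = ⊥ := by
        ext m
        simp only [mem_stabilizer_iff, Subgroup.mem_bot]
        exact ⟨fun h => hfree m a ha h, fun h => by rw [h, one_smul]⟩
      rw [Nat.card_congr (orbitEquivQuotientStabilizer M a), hstab,
        Nat.card_congr (QuotientGroup.quotientBot (G := M)).toEquiv]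
  have h2 : ∑ ω : Ω, Nat.card ω.orbit
      = 1 + (Fintype.card Ω - 1) * Nat.card M := by
    rw [← Finset.add_sum_erase Finset.univ _ (Finset.mem_univ z), hzcard]
    congr 1
    rw [Finset.sum_congr rfl (fun ω hω => hocard ω (Finset.ne_of_mem_erase hω)),
      Finset.sum_const, Finset.card_erase_of_mem (Finset.mem_univ z), smul_eq_mul,
      Finset.card_univ]
  constructor
  · rw [h1, h2, Nat.card_eq_fintype_card (α := Ω)]
  · rw [Nat.card_eq_fintype_card (α := Ω)]
    exact Fintype.card_pos_iff.mpr ⟨z⟩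

end AuxGeneric

section AuxMain
open Multiplicative MulAction
section main
variable (p q r : ℕ)

def piP : ZMod (p * r) →+* ZMod p := ZMod.castHom (dvd_mul_right p r) (ZMod p)
def piR : ZMod (p * r) →+* ZMod r := ZMod.castHom (dvd_mul_left r p) (ZMod r)

variable [NeZero p] [NeZero q] [NeZero r]

lemma crt_fst (hcop : Nat.Coprime p r) (x : ZMod (p * r)) :
    (ZMod.chineseRemainder hcop x).1 = piP p r x := by
  have h1 : (ZMod.chineseRemainder hcop x) = ZMod.castHom (show Nat.lcm p r ∣ p * r by
    simp [Nat.lcm_dvd_iff]) (ZMod p × ZMod r) x := rfl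
  haveI : NeZero (p * r) := ⟨Nat.mul_ne_zero (NeZero.ne p) (NeZero.ne r)⟩
  rw [h1, piP, ZMod.castHom_apply, ZMod.castHom_apply, ← ZMod.natCast_val, ← ZMod.natCast_val]
  rfl

lemma crt_snd (hcop : Nat.Coprime p r) (x : ZMod (p * r)) :
    (ZMod.chineseRemainder hcop x).2 = piR p r x := by
  have h1 : (ZMod.chineseRemainder hcop x) = ZMod.castHom (show Nat.lcm p r ∣ p * r by
    simp [Nat.lcm_dvd_iff]) (ZMod p × ZMod r) x := rfl
  haveI : NeZero (p * r) := ⟨Nat.mul_ne_zero (NeZero.ne p) (NeZero.ne r)⟩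
  rw [h1, piR, ZMod.castHom_apply, ZMod.castHom_apply, ← ZMod.natCast_val, ← ZMod.natCast_val]
  rfl

variable (u : (ZMod (p * r))ˣ) (hu1 : u ^ q = 1)

lemma zmodPowHom_eq (x : ZMod q) :
    zmodPowHom q u hu1 (Multiplicative.ofAdd x) = u ^ x.val := by
  rw [← zmodPowHom_natCast u hu1 x.val, ZMod.natCast_val, ZMod.cast_id]

lemma piP_pow (hup : piP p r ((u : (ZMod (p*r))ˣ) : ZMod (p * r)) = 1)
    (a : Multiplicative (ZMod q)) :
    piP p r ((zmodPowHom q u hu1 a : (ZMod (p * r))ˣ) : ZMod (p * r)) = 1 := by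
  conv_lhs => rw [show a = Multiplicative.ofAdd a.toAdd from rfl]
  rw [zmodPowHom_eq, Units.val_pow_eq_pow_val, map_pow, hup, one_pow]

lemma piR_pow (ur : (ZMod r)ˣ) (hurr : piR p r ((u : (ZMod (p*r))ˣ) : ZMod (p * r)) = ur)
    (a : Multiplicative (ZMod q)) :
    piR p r ((zmodPowHom q u hu1 a : (ZMod (p * r))ˣ) : ZMod (p * r))
      = ((ur ^ a.toAdd.val : (ZMod r)ˣ) : ZMod r) := by
  conv_lhs => rw [show a = Multiplicative.ofAdd a.toAdd from rfl]
  rw [zmodPowHom_eq, Units.val_pow_eq_pow_val, map_pow, hurr, Units.val_pow_eq_pow_val]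

def fG : Gdet q (p * r) u hu1 → ZMod p × ZMod q :=
  fun g => (piP p r g.left.toAdd, g.right.toAdd)

lemma fG_conj (hup : piP p r ((u : (ZMod (p*r))ˣ) : ZMod (p * r)) = 1)
    (g h : Gdet q (p * r) u hu1) :
    fG p q r u hu1 (g * h * g⁻¹) = fG p q r u hu1 h := by
  rw [conj_formula]
  unfold fG
  simp only [toAdd_ofAdd, map_sub, map_add, map_mul, piP_pow p q r u hu1 hup, one_mul]
  simp

def FG (hup : piP p r ((u : (ZMod (p*r))ˣ) : ZMod (p * r)) = 1) :
    ConjClasses (Gdet q (p * r) u hu1) → ZMod p × ZMod q :=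
  Quotient.lift (fG p q r u hu1) (fun g h (hgh : IsConj g h) => by
    obtain ⟨k, hk⟩ := isConj_iff.mp hgh
    rw [← hk]; exact (fG_conj p q r u hu1 hup k g).symm)

lemma FG_mk (hup : piP p r ((u : (ZMod (p*r))ˣ) : ZMod (p * r)) = 1)
    (g : Gdet q (p * r) u hu1) :
    FG p q r u hu1 hup (ConjClasses.mk g) = fG p q r u hu1 g := rfl

lemma unit_pow_ne_one (ur : (ZMod r)ˣ) (hordr : orderOf ur = q)
    (a : ZMod q) (ha : a ≠ 0) :
    (1 : ZMod r) - ((ur ^ a.val : (ZMod r)ˣ) : ZMod r) ≠ 0 := by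
  rw [sub_ne_zero]
  intro h
  have h1 : ur ^ a.val = 1 := Units.ext h.symm
  have hdvd : q ∣ a.val := by
    have := orderOf_dvd_of_pow_eq_one h1; rwa [hordr] at this
  have hlt : a.val < q := ZMod.val_lt a
  have hne : a.val ≠ 0 := fun h0 => ha ((ZMod.val_eq_zero a).mp h0)
  have := Nat.le_of_dvd (Nat.pos_of_ne_zero hne) hdvd
  omega

lemma exists_solution [Fact r.Prime] (hcop : Nat.Coprime p r)
    (ur : (ZMod r)ˣ) (hurr : piR p r ((u : (ZMod (p*r))ˣ) : ZMod (p * r)) = ur)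
    (hordr : orderOf ur = q)
    (hup : piP p r ((u : (ZMod (p*r))ˣ) : ZMod (p * r)) = 1)
    (a : Multiplicative (ZMod q)) (ha : a.toAdd ≠ 0)
    (δ : ZMod (p * r)) (hδ : piP p r δ = 0) :
    ∃ c : ZMod (p * r),
      (1 - ((zmodPowHom q u hu1 a : (ZMod (p * r))ˣ) : ZMod (p * r))) * c = δ := by
  set w := ((zmodPowHom q u hu1 a : (ZMod (p * r))ˣ) : ZMod (p * r)) with hw
  have hv : piR p r w = ((ur ^ a.toAdd.val : (ZMod r)ˣ) : ZMod r) :=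
    piR_pow p q r u hu1 ur hurr a
  have hwp : piP p r w = 1 := piP_pow p q r u hu1 hup a
  have hvne := unit_pow_ne_one q r ur hordr a.toAdd ha
  have key : ∀ x : ZMod (p * r), ZMod.chineseRemainder hcop x = (piP p r x, piR p r x) :=
    fun x => Prod.ext (crt_fst p r hcop x) (crt_snd p r hcop x)
  set y := (1 - ((ur ^ a.toAdd.val : (ZMod r)ˣ) : ZMod r))⁻¹ * piR p r δ with hy
  set c0 := (ZMod.chineseRemainder hcop).symm (0, y) with hc0
  have hs : (piP p r c0, piR p r c0) = ((0 : ZMod p), y) := by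
    rw [← key, hc0, RingEquiv.apply_symm_apply]
  rw [Prod.mk.injEq] at hs
  refine ⟨c0, (ZMod.chineseRemainder hcop).injective ?_⟩
  rw [key, key, Prod.mk.injEq, map_mul, map_mul, map_sub, map_sub, map_one, map_one]
  constructor
  · rw [hwp, sub_self, zero_mul, hδ]
  · rw [hv, hs.2, hy, ← mul_assoc, mul_inv_cancel₀ hvne, one_mul]

lemma fiber_card_ne [Fact r.Prime] (hcop : Nat.Coprime p r)
    (ur : (ZMod r)ˣ) (hurr : piR p r ((u : (ZMod (p*r))ˣ) : ZMod (p * r)) = ur)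
    (hordr : orderOf ur = q)
    (hup : piP p r ((u : (ZMod (p*r))ˣ) : ZMod (p * r)) = 1)
    (j : ZMod p) (a : ZMod q) (ha : a ≠ 0) :
    Nat.card {c : ConjClasses (Gdet q (p * r) u hu1) //
      FG p q r u hu1 hup c = (j, a)} = 1 := by
  have key : ∀ x : ZMod (p * r), ZMod.chineseRemainder hcop x = (piP p r x, piR p r x) :=
    fun x => Prod.ext (crt_fst p r hcop x) (crt_snd p r hcop x)
  rw [Nat.card_eq_one_iff_unique]
  constructor
  · constructor
    intro ⟨c1, h1⟩ ⟨c2, h2⟩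
    apply Subtype.ext
    obtain ⟨g1, rfl⟩ := ConjClasses.mk_surjective c1
    obtain ⟨g2, rfl⟩ := ConjClasses.mk_surjective c2
    rw [FG_mk] at h1 h2
    unfold fG at h1 h2
    rw [Prod.mk.injEq] at h1 h2
    have hright : g1.right = g2.right := by
      apply Multiplicative.toAdd.injective; rw [h1.2, h2.2]
    have ha1 : g1.right.toAdd ≠ 0 := by rw [h1.2]; exact ha
    have hδ : piP p r (g2.left.toAdd - g1.left.toAdd) = 0 := by
      rw [map_sub, h1.1, h2.1, sub_self]
    obtain ⟨c, hc⟩ := exists_solution p q r u hu1 hcop ur hurr hordr hup g1.right ha1 _ hδ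
    rw [ConjClasses.mk_eq_mk_iff_isConj]
    apply isConj_iff.mpr
    refine ⟨⟨Multiplicative.ofAdd c, 1⟩, ?_⟩
    rw [conj_formula]
    ext
    · show ((⟨Multiplicative.ofAdd _, g1.right⟩ : Gdet q (p * r) u hu1)).left = g2.left
      apply Multiplicative.toAdd.injective
      simp only [toAdd_ofAdd, map_one, Units.val_one, one_mul]
      show c + g1.left.toAdd
        - ((zmodPowHom q u hu1 g1.right : (ZMod (p * r))ˣ) : ZMod (p * r)) * c
        = g2.left.toAdd
      linear_combination hc
    · exact hright
  · refine ⟨⟨ConjClasses.mk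
      ⟨Multiplicative.ofAdd ((ZMod.chineseRemainder hcop).symm (j, 0)), Multiplicative.ofAdd a⟩,
      ?_⟩⟩
    rw [FG_mk]
    unfold fG
    have h0 := key ((ZMod.chineseRemainder hcop).symm (j, 0))
    rw [RingEquiv.apply_symm_apply, Prod.mk.injEq] at h0
    show (piP p r ((ZMod.chineseRemainder hcop).symm (j, 0)), a) = (j, a)
    rw [← h0.1]

lemma fiber_card_zero [Fact r.Prime] (hcop : Nat.Coprime p r)
    (ur : (ZMod r)ˣ) (hurr : piR p r ((u : (ZMod (p*r))ˣ) : ZMod (p * r)) = ur)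
    (hordr : orderOf ur = q)
    (hup : piP p r ((u : (ZMod (p*r))ˣ) : ZMod (p * r)) = 1)
    (j : ZMod p) :
    Nat.card {c : ConjClasses (Gdet q (p * r) u hu1) //
        FG p q r u hu1 hup c = (j, 0)}
      = Nat.card (MulAction.orbitRel.Quotient (Subgroup.zpowers ur) (ZMod r)) := by
  have key : ∀ x : ZMod (p * r), ZMod.chineseRemainder hcop x = (piP p r x, piR p r x) :=
    fun x => Prod.ext (crt_fst p r hcop x) (crt_snd p r hcop x)
  set χ := ZMod.chineseRemainder hcop with hχ
  let A : ZMod r → Gdet q (p * r) u hu1 :=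
    fun s => ⟨Multiplicative.ofAdd (χ.symm (j, s)), 1⟩
  have hAleft : ∀ s, (A s).left.toAdd = χ.symm (j, s) := fun s => rfl
  have hAright : ∀ s, (A s).right = 1 := fun s => rfl
  have hpiPA : ∀ s, piP p r (χ.symm (j, s)) = j := by
    intro s
    have h0 := key (χ.symm (j, s))
    rw [hχ] at h0  -- ensure χ form
    rw [RingEquiv.apply_symm_apply] at h0
    rw [Prod.mk.injEq] at h0
    exact h0.1.symm
  have hpiRA : ∀ s, piR p r (χ.symm (j, s)) = s := by
    intro s
    have h0 := key (χ.symm (j, s))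
    rw [RingEquiv.apply_symm_apply, Prod.mk.injEq] at h0
    exact h0.2.symm
  have hFA : ∀ s : ZMod r, FG p q r u hu1 hup (ConjClasses.mk (A s)) = (j, 0) := by
    intro s
    rw [FG_mk]
    show (piP p r (χ.symm (j, s)), (1 : Multiplicative (ZMod q)).toAdd) = (j, 0)
    rw [hpiPA, toAdd_one]
  have hact : ∀ (x : ZMod q) (s : ZMod r),
      (⟨1, Multiplicative.ofAdd x⟩ : Gdet q (p * r) u hu1) * A s
          * (⟨1, Multiplicative.ofAdd x⟩ : Gdet q (p * r) u hu1)⁻¹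
        = A (((ur ^ x.val : (ZMod r)ˣ) : ZMod r) * s) := by
    intro x s
    rw [conj_formula]
    have hr1 : (A s).right = 1 := rfl
    ext
    · apply Multiplicative.toAdd.injective
      show (1 : Multiplicative (ZMod (p * r))).toAdd
          + ((zmodPowHom q u hu1 (Multiplicative.ofAdd x) : (ZMod (p * r))ˣ) : ZMod (p * r))
            * (A s).left.toAdd
          - ((zmodPowHom q u hu1 (A s).right : (ZMod (p * r))ˣ) : ZMod (p * r))
            * (1 : Multiplicative (ZMod (p * r))).toAdd
        = (A (((ur ^ x.val : (ZMod r)ˣ) : ZMod r) * s)).left.toAdd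
      rw [toAdd_one, hAleft, hAleft, zero_add, mul_zero, sub_zero]
      apply χ.injective
      rw [map_mul, RingEquiv.apply_symm_apply, RingEquiv.apply_symm_apply,
        key ((zmodPowHom q u hu1 (Multiplicative.ofAdd x) : (ZMod (p * r))ˣ) : ZMod (p * r)),
        piP_pow p q r u hu1 hup, piR_pow p q r u hu1 ur hurr, Prod.mk_mul_mk, one_mul]
      rfl
    · rfl
  have hzpow : ∀ (k : ℤ), ur ^ (((k : ZMod q)).val) = ur ^ k := by
    intro k
    have h1 : (((k : ZMod q)).val : ℤ) = k % (q : ℤ) := ZMod.val_intCast k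
    have h2 := zpow_mod_orderOf ur k
    rw [hordr] at h2
    rw [← zpow_natCast, h1, h2]
  -- the backward map
  let B : MulAction.orbitRel.Quotient (Subgroup.zpowers ur) (ZMod r) →
      {c : ConjClasses (Gdet q (p * r) u hu1) // FG p q r u hu1 hup c = (j, 0)} :=
    Quotient.lift (fun s => ⟨ConjClasses.mk (A s), hFA s⟩) (by
      intro s1 s2 hs
      obtain ⟨m, hm⟩ := hs
      obtain ⟨k, hk⟩ := Subgroup.mem_zpowers_iff.mp m.2
      apply Subtype.ext
      show ConjClasses.mk (A s1) = ConjClasses.mk (A s2)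
      have hs1 : s1 = ((ur ^ ((k : ZMod q)).val : (ZMod r)ˣ) : ZMod r) * s2 := by
        rw [hzpow, hk]
        exact hm.symm
      rw [hs1, ← hact, ConjClasses.mk_eq_mk_iff_isConj]
      exact (isConj_iff.mpr ⟨_, rfl⟩).symm)
  have hBmk : ∀ s : ZMod r, B (Quotient.mk'' s) = ⟨ConjClasses.mk (A s), hFA s⟩ :=
    fun s => rfl
  have hBinj : Function.Injective B := by
    intro ω1 ω2 h
    induction ω1 using Quotient.inductionOn' with
    | h s1 =>
    induction ω2 using Quotient.inductionOn' with
    | h s2 =>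
    rw [hBmk, hBmk] at h
    have h2 : ConjClasses.mk (A s1) = ConjClasses.mk (A s2) := congrArg Subtype.val h
    rw [ConjClasses.mk_eq_mk_iff_isConj] at h2
    obtain ⟨g, hg⟩ := isConj_iff.mp h2
    rw [conj_formula] at hg
    have hleft := congrArg (fun z : Gdet q (p * r) u hu1 => piR p r z.left.toAdd) hg
    simp only [toAdd_ofAdd, hAleft, hAright, map_one, Units.val_one, one_mul] at hleft
    rw [map_sub, map_add, map_mul, hpiRA, hpiRA,
      piR_pow p q r u hu1 ur hurr] at hleft
    have hv : ((ur ^ ((g.right.toAdd).val) : (ZMod r)ˣ) : ZMod r) * s1 = s2 := by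
      linear_combination hleft
    have hmem : (ur ^ ((g.right.toAdd).val) : (ZMod r)ˣ) ∈ Subgroup.zpowers ur :=
      Subgroup.mem_zpowers_iff.mpr ⟨((g.right.toAdd).val : ℤ), zpow_natCast ur _⟩
    have hrel : (MulAction.orbitRel (Subgroup.zpowers ur) (ZMod r)).r s2 s1 :=
      ⟨⟨_, hmem⟩, hv⟩
    exact (Quotient.sound hrel).symm
  have hBsurj : Function.Surjective B := by
    rintro ⟨c, hc⟩
    obtain ⟨g, rfl⟩ := ConjClasses.mk_surjective c
    rw [FG_mk] at hc
    unfold fG at hc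
    rw [Prod.mk.injEq] at hc
    refine ⟨Quotient.mk'' (piR p r g.left.toAdd), ?_⟩
    rw [hBmk]
    apply Subtype.ext
    show ConjClasses.mk (A (piR p r g.left.toAdd)) = ConjClasses.mk g
    congr 1
    ext
    · show (A (piR p r g.left.toAdd)).left.toAdd = g.left.toAdd
      rw [hAleft]
      apply χ.injective
      rw [RingEquiv.apply_symm_apply, key g.left.toAdd, hc.1]
    · apply Multiplicative.toAdd.injective
      rw [hAright, toAdd_one, hc.2]
  exact Nat.card_congr (Equiv.ofBijective B ⟨hBinj, hBsurj⟩).symm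

lemma orbit_quotient_card [Fact r.Prime] (hq0 : 0 < q)
    (ur : (ZMod r)ˣ) (hordr : orderOf ur = q) :
    Nat.card (MulAction.orbitRel.Quotient (Subgroup.zpowers ur) (ZMod r))
      = 1 + (r - 1) / q := by
  have hfix : ∀ m : Subgroup.zpowers ur, m • (0 : ZMod r) = 0 := by
    intro m
    show ((m : (ZMod r)ˣ) : ZMod r) * 0 = 0
    rw [mul_zero]
  have hfree : ∀ (m : Subgroup.zpowers ur) (a : ZMod r), a ≠ 0 → m • a = a → m = 1 := by
    intro m a ha h
    have h' : ((m : (ZMod r)ˣ) : ZMod r) * a = a := h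
    have h2 : (((m : (ZMod r)ˣ) : ZMod r) - 1) * a = 0 := by
      rw [sub_mul, one_mul, h', sub_self]
    rcases mul_eq_zero.mp h2 with h3 | h3
    · have h4 : ((m : (ZMod r)ˣ) : ZMod r) = 1 := by
        have := sub_eq_zero.mp h3; exact this
      exact Subtype.ext (Units.ext h4)
    · exact absurd h3 ha
  obtain ⟨h1, h2⟩ := orbit_count (M := Subgroup.zpowers ur) (α := ZMod r) 0 hfix hfree
  rw [Nat.card_zmod, Nat.card_zpowers, hordr] at h1
  set n := Nat.card (MulAction.orbitRel.Quotient (Subgroup.zpowers ur) (ZMod r)) with hn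
  have h3 : (r - 1) / q = n - 1 := by
    rw [show r - 1 = (n - 1) * q from by omega, Nat.mul_div_cancel _ hq0]
  omega

theorem main_aux (p q r : ℕ) (hp : p.Prime) (hq : q.Prime) (hr : r.Prime)
    (hpq : p < q) (hqr : q < r) (hC : q ∣ r - 1) (t : ℤ)
    (u : (ZMod (p * r))ˣ) (hu : (u : ZMod (p * r)) = (t : ZMod (p * r)))
    (hord : orderOf u = q)
    (hp1 : (t : ZMod p) = 1)
    (ur : (ZMod r)ˣ) (hur : (ur : ZMod r) = (t : ZMod r)) (hordr : orderOf ur = q)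
    (h1 : u ^ q = 1) :
    Nat.card (ConjClasses (Gdet q (p * r) u h1)) = p * q + p * ((r - 1) / q) := by
  haveI : NeZero p := ⟨hp.pos.ne'⟩
  haveI : NeZero q := ⟨hq.pos.ne'⟩
  haveI : NeZero r := ⟨hr.pos.ne'⟩
  haveI : Fact r.Prime := ⟨hr⟩
  have hcop : Nat.Coprime p r := (Nat.coprime_primes hp hr).mpr (by omega)
  have hup : piP p r ((u : (ZMod (p * r))ˣ) : ZMod (p * r)) = 1 := by
    rw [hu, map_intCast, hp1]
  have hurr : piR p r ((u : (ZMod (p * r))ˣ) : ZMod (p * r)) = ((ur : (ZMod r)ˣ) : ZMod r) := by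
    rw [hu, map_intCast, hur]
  rw [nat_card_eq_sum_fibers (FG p q r u h1 hup)]
  have hfib : ∀ y : ZMod p × ZMod q,
      Nat.card {c : ConjClasses (Gdet q (p * r) u h1) // FG p q r u h1 hup c = y}
        = 1 + (if y.2 = 0 then (r - 1) / q else 0) := by
    rintro ⟨j, a⟩
    by_cases ha : a = 0
    · subst ha
      rw [fiber_card_zero p q r u h1 hcop ur hurr hordr hup j,
        orbit_quotient_card q r hq.pos ur hordr]
      simp
    · simp only [if_neg ha, Nat.add_zero]
      exact fiber_card_ne p q r u h1 hcop ur hurr hordr hup j a ha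
  rw [Finset.sum_congr rfl (fun y _ => hfib y)]
  rw [Finset.sum_add_distrib, Finset.sum_const, Finset.card_univ]
  have hcardpq : Fintype.card (ZMod p × ZMod q) = p * q := by
    rw [Fintype.card_prod, ZMod.card, ZMod.card]
  rw [hcardpq, smul_eq_mul, mul_one]
  congr 1
  rw [Fintype.sum_prod_type]
  have hinner : ∀ j : ZMod p,
      (∑ a : ZMod q, if a = 0 then (r - 1) / q else 0) = (r - 1) / q := by
    intro j
    rw [Finset.sum_ite_eq' Finset.univ (0 : ZMod q) (fun _ => (r - 1) / q),
      if_pos (Finset.mem_univ _)]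
  rw [Finset.sum_congr rfl (fun j _ => hinner j), Finset.sum_const, Finset.card_univ,
    ZMod.card, smul_eq_mul]

end main
end AuxMain

/-- **Class number of groups of order `pqr` with `d = q` (condition C).**
Let `p < q < r` be primes with `q ∣ r - 1`, and let `t` be an integer whose residue
class modulo `p * r` is a unit of multiplicative order `q`, with `t ≡ 1` modulo `p` and
`t` of order `q` modulo `r`.  Then `G(q, pr, t)` has exactly
`p * q + p * (r - 1) / q` conjugacy classes. -/
theorem classNumber_pqr_condC (p q r : ℕ) (hp : p.Prime) (hq : q.Prime) (hr : r.Prime)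
    (hpq : p < q) (hqr : q < r) (hC : q ∣ r - 1) (t : ℤ)
    (u : (ZMod (p * r))ˣ) (hu : (u : ZMod (p * r)) = (t : ZMod (p * r)))
    (hord : orderOf u = q)
    (hp1 : (t : ZMod p) = 1)
    (ur : (ZMod r)ˣ) (hur : (ur : ZMod r) = (t : ZMod r)) (hordr : orderOf ur = q) :
    Nat.card (ConjClasses
        (Gdet q (p * r) u (by rw [← hord]; exact pow_orderOf_eq_one u)))
      = p * q + p * ((r - 1) / q) := by
  exact main_aux p q r hp hq hr hpq hqr hC t u hu hord hp1 ur hur hordr _
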